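/- Let $r \geq t \geq 3$ and let $K = K_{n_1,\ldots,n_r}$ be a complete $r$-partite graph with parts $V_1,\ldots,V_r$ of sizes $n_1 \geq \cdots \geq n_r$. Then the maximum number of edges of a $K_t$-free spanning subgraph of $K$ equals $f(n_1,\ldots,n_r,1,t) = \max_{\mathcal{P}} \sum_{I \neq I' \in \mathcal{P}} n_I n_{I'}$, where the maximum runs over partitions $\mathcal{P}$ of $[r]$ into $t-1$ parts and $n_I = \sum_{i\in I} n_i$. -/

import Mathlib

open Finset Function

/-- The complete `r`-partite graph `K_{n₁,…,n_r}` with classes `V_i = {i} × Fin (n i)`. -/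
def completeMultipartite {r : ℕ} (n : Fin r → ℕ) : SimpleGraph (Σ i : Fin r, Fin (n i)) where
  Adj u v := u.1 ≠ v.1
  symm := ⟨fun _ _ h => h.symm⟩
  loopless := ⟨fun _ h => h rfl⟩

/-- The number of edges of the complete multipartite graph obtained by merging
classes of sizes `n 1, …, n r` according to the partition (surjection) `P` into `s` groups. -/
def partitionValue {r s : ℕ} (n : Fin r → ℕ) (P : Fin r → Fin s) : ℕ :=
  ∑ p ∈ Finset.univ.filter (fun p : Fin s × Fin s => p.1 < p.2),
    (∑ i ∈ Finset.univ.filter (fun i => P i = p.1), n i) *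
    (∑ i ∈ Finset.univ.filter (fun i => P i = p.2), n i)

/-- `f(n₁,…,n_r,1,t)`: the maximum over partitions of `[r]` into `t-1` parts. -/
def fval (r t : ℕ) (n : Fin r → ℕ) : ℕ :=
  Finset.sup
    (Finset.univ.filter (fun P : Fin r → Fin (t - 1) => Function.Surjective P))
    (partitionValue n)

/-- Bollobás–Erdős–Straus: `ex(n₁,…,n_r, K_t) = f(n₁,…,n_r,1,t)`, i.e. the maximum number
of edges of a `K_t`-free spanning subgraph of `K_{n₁,…,n_r}` is `f(n₁,…,n_r,1,t)`. -/

lemma sum_sum_eq {γ δ : Type*} [Fintype γ] [Fintype δ] (f : γ → δ → ℕ) :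
    (∑ a, ∑ b, f a b) = ∑ p : γ × δ, f p.1 p.2 := by
  rw [← Finset.univ_product_univ, Finset.sum_product]

variable {mm : ℕ}
local notation "α" => Fin mm

lemma sum_ne_two_mul (f : α → α → ℕ) (hf : ∀ a b, f a b = f b a) :
    ∑ p ∈ Finset.univ.filter (fun p : α × α => p.1 ≠ p.2), f p.1 p.2
      = 2 * ∑ p ∈ Finset.univ.filter (fun p : α × α => p.1 < p.2), f p.1 p.2 := by
  have hsplit : Finset.univ.filter (fun p : α × α => p.1 ≠ p.2)
      = (Finset.univ.filter (fun p : α × α => p.1 < p.2)) ∪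
        (Finset.univ.filter (fun p : α × α => p.2 < p.1)) := by
    ext p
    simp only [Finset.mem_filter, Finset.mem_union, Finset.mem_univ, true_and]
    constructor
    · intro h; exact (lt_or_gt_of_ne h).imp id id
    · rintro (h | h); exacts [ne_of_lt h, (ne_of_lt h).symm]
  have hdisj : Disjoint (Finset.univ.filter (fun p : α × α => p.1 < p.2))
      (Finset.univ.filter (fun p : α × α => p.2 < p.1)) := by
    rw [Finset.disjoint_filter]
    intro p _ h1 h2
    exact absurd h1 (not_lt_of_gt h2)
  rw [hsplit, Finset.sum_union hdisj, two_mul]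
  congr 1
  apply Finset.sum_nbij' (fun p => Prod.swap p) (fun p => Prod.swap p) <;>
    simp +contextual [hf]

lemma sum_pairs_eq (f : α → α → ℕ) :
    ∑ p : α × α, f p.1 p.2
      = (∑ p ∈ Finset.univ.filter (fun p : α × α => p.1 ≠ p.2), f p.1 p.2)
        + ∑ a : α, f a a := by
  rw [← Finset.sum_filter_add_sum_filter_not Finset.univ (fun p : α × α => p.1 ≠ p.2)]
  congr 1
  apply Finset.sum_nbij' (fun p => p.1) (fun a => (a, a))
    <;> simp +contextual

section pv
variable {r m : ℕ} (n : Fin r → ℕ) (ψ : Fin r → Fin m)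

/-- class sum -/
def clS (a : Fin m) : ℕ := ∑ i ∈ Finset.univ.filter (fun i => ψ i = a), n i

lemma pv_double :
    (∑ a : Fin m, ∑ b : Fin m, if a ≠ b then clS n ψ a * clS n ψ b else 0)
      = 2 * partitionValue n ψ := by
  rw [sum_sum_eq (fun a b => if a ≠ b then clS n ψ a * clS n ψ b else 0),
    ← Finset.sum_filter,
    sum_ne_two_mul (fun a b => clS n ψ a * clS n ψ b) (fun a b => Nat.mul_comm _ _)]
  rfl

lemma clS_total : ∑ a : Fin m, clS n ψ a = ∑ i, n i :=
  Finset.sum_fiberwise _ _ _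

lemma pv_sq :
    2 * partitionValue n ψ + ∑ a : Fin m, clS n ψ a * clS n ψ a
      = (∑ i, n i) * (∑ i, n i) := by
  rw [← clS_total n ψ, Fintype.sum_mul_sum, ← pv_double n ψ,
    sum_sum_eq (fun a b => clS n ψ a * clS n ψ b),
    sum_pairs_eq (fun a b => clS n ψ a * clS n ψ b),
    sum_sum_eq (fun a b => if a ≠ b then clS n ψ a * clS n ψ b else 0),
    ← Finset.sum_filter]

end pv

section surj
variable {r m : ℕ} (n : Fin r → ℕ)

lemma pv_le_update (ψ : Fin r → Fin m) (i j : Fin r) (hij : i ≠ j) (hψij : ψ i = ψ j)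
    (a₀ : Fin m) (ha₀ : ∀ k, ψ k ≠ a₀) :
    partitionValue n ψ ≤ partitionValue n (Function.update ψ i a₀) := by
  set ψ' := Function.update ψ i a₀ with hψ'
  have ha₀ψi : a₀ ≠ ψ i := fun h => ha₀ i h.symm
  have hS'a₀ : clS n ψ' a₀ = n i := by
    have : Finset.univ.filter (fun k => ψ' k = a₀) = {i} := by
      ext k
      simp only [Finset.mem_filter, Finset.mem_univ, true_and, Finset.mem_singleton, hψ']
      constructor
      · intro h
        by_contra hk
        rw [Function.update_of_ne hk] at h
        exact ha₀ k h
      · intro h; subst h; rw [Function.update_self]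
    rw [clS, this, Finset.sum_singleton]
  have hSa₀ : clS n ψ a₀ = 0 := by
    rw [clS]
    apply Finset.sum_eq_zero
    intro k hk
    exact absurd (Finset.mem_filter.mp hk).2 (ha₀ k)
  have hSψi : clS n ψ (ψ i) = n i + clS n ψ' (ψ i) := by
    have hfil : Finset.univ.filter (fun k => ψ k = ψ i)
        = insert i (Finset.univ.filter (fun k => ψ' k = ψ i)) := by
      ext k
      simp only [Finset.mem_filter, Finset.mem_univ, true_and, Finset.mem_insert, hψ']
      constructor
      · intro h
        by_cases hk : k = i
        · exact Or.inl hk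
        · exact Or.inr (by rw [Function.update_of_ne hk]; exact h)
      · rintro (h | h)
        · subst h; rfl
        · by_cases hk : k = i
          · subst hk; rfl
          · rw [Function.update_of_ne hk] at h; exact h
    have hnotmem : i ∉ Finset.univ.filter (fun k => ψ' k = ψ i) := by
      simp only [Finset.mem_filter, Finset.mem_univ, true_and, hψ', Function.update_self]
      exact ha₀ψi
    rw [clS, hfil, Finset.sum_insert hnotmem]
    rfl
  have hSother : ∀ a : Fin m, a ≠ a₀ → a ≠ ψ i → clS n ψ' a = clS n ψ a := by
    intro a h1 h2
    rw [clS, clS]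
    apply Finset.sum_congr _ (fun _ _ => rfl)
    ext k
    simp only [Finset.mem_filter, Finset.mem_univ, true_and, hψ']
    by_cases hk : k = i
    · subst hk
      rw [Function.update_self]
      constructor
      · intro h; exact absurd h.symm h1
      · intro h; exact absurd h.symm h2
    · rw [Function.update_of_ne hk]
  -- sum of squares comparison
  have hpair : ({a₀, ψ i} : Finset (Fin m)) ⊆ Finset.univ := Finset.subset_univ _
  have hsq : ∑ a : Fin m, clS n ψ' a * clS n ψ' a ≤ ∑ a : Fin m, clS n ψ a * clS n ψ a := by
    rw [← Finset.sum_sdiff hpair (f := fun a => clS n ψ' a * clS n ψ' a),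
        ← Finset.sum_sdiff hpair (f := fun a => clS n ψ a * clS n ψ a)]
    have hdiff : ∑ a ∈ Finset.univ \ {a₀, ψ i}, clS n ψ' a * clS n ψ' a
        = ∑ a ∈ Finset.univ \ {a₀, ψ i}, clS n ψ a * clS n ψ a := by
      apply Finset.sum_congr rfl
      intro a ha
      simp only [Finset.mem_sdiff, Finset.mem_insert, Finset.mem_singleton, not_or] at ha
      rw [hSother a ha.2.1 ha.2.2]
    rw [hdiff]
    apply Nat.add_le_add_left
    rw [Finset.sum_pair ha₀ψi, Finset.sum_pair ha₀ψi]
    rw [hS'a₀, hSa₀, hSψi]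
    nlinarith [Nat.zero_le (clS n ψ' (ψ i))]
  have h1 := pv_sq n ψ
  have h2 := pv_sq n ψ'
  omega

lemma exists_surj_ge (hmr : m ≤ r) (ψ : Fin r → Fin m) :
    ∃ ψ' : Fin r → Fin m, Function.Surjective ψ' ∧
      partitionValue n ψ ≤ partitionValue n ψ' := by
  -- strong induction on the number of missed classes
  suffices h : ∀ (k : ℕ) (ψ : Fin r → Fin m),
      ((Finset.univ : Finset (Fin m)) \ Finset.univ.image ψ).card ≤ k →
      ∃ ψ' : Fin r → Fin m, Function.Surjective ψ' ∧
        partitionValue n ψ ≤ partitionValue n ψ' by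
    exact h _ ψ le_rfl
  intro k
  induction k with
  | zero =>
    intro ψ hk
    refine ⟨ψ, ?_, le_rfl⟩
    have : (Finset.univ : Finset (Fin m)) ⊆ Finset.univ.image ψ := by
      rw [← Finset.sdiff_eq_empty_iff_subset]
      exact Finset.card_eq_zero.mp (Nat.le_zero.mp hk)
    intro a
    obtain ⟨i, _, hi⟩ := Finset.mem_image.mp (this (Finset.mem_univ a))
    exact ⟨i, hi⟩
  | succ k ih =>
    intro ψ hk
    by_cases hM : ((Finset.univ : Finset (Fin m)) \ Finset.univ.image ψ) = ∅
    · refine ⟨ψ, ?_, le_rfl⟩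
      have : (Finset.univ : Finset (Fin m)) ⊆ Finset.univ.image ψ :=
        Finset.sdiff_eq_empty_iff_subset.mp hM
      intro a
      obtain ⟨i, _, hi⟩ := Finset.mem_image.mp (this (Finset.mem_univ a))
      exact ⟨i, hi⟩
    · obtain ⟨a₀, ha₀⟩ := Finset.nonempty_iff_ne_empty.mpr hM
      have ha₀' : a₀ ∉ Finset.univ.image ψ := (Finset.mem_sdiff.mp ha₀).2
      have ha₀'' : ∀ k, ψ k ≠ a₀ := by
        intro k h
        exact ha₀' (Finset.mem_image.mpr ⟨k, Finset.mem_univ k, h⟩)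
      -- pigeonhole: ψ is not injective
      have hcard : (Finset.univ.image ψ).card < (Finset.univ : Finset (Fin r)).card := by
        have h1 : (Finset.univ.image ψ).card < m := by
          have h2 : Finset.univ.image ψ ⊂ Finset.univ :=
            Finset.ssubset_univ_iff.mpr (fun h => ha₀' (h ▸ Finset.mem_univ a₀))
          simpa using Finset.card_lt_card h2
        calc (Finset.univ.image ψ).card < m := h1
          _ ≤ r := hmr
          _ = (Finset.univ : Finset (Fin r)).card := by simp
      obtain ⟨i, _, j, _, hij, hψij⟩ :=
        Finset.exists_ne_map_eq_of_card_lt_of_maps_to hcard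
          (fun i _ => Finset.mem_image_of_mem ψ (Finset.mem_univ i))
      have hle := pv_le_update n ψ i j hij hψij a₀ ha₀''
      have hmeasure : ((Finset.univ : Finset (Fin m)) \
          Finset.univ.image (Function.update ψ i a₀)).card ≤ k := by
        have himg : Finset.univ.image (Function.update ψ i a₀)
            = insert a₀ (Finset.univ.image ψ) := by
          ext a
          simp only [Finset.mem_image, Finset.mem_insert, Finset.mem_univ, true_and]
          constructor
          · rintro ⟨l, hl⟩
            by_cases hli : l = i
            · subst hli; rw [Function.update_self] at hl; exact Or.inl hl.symm
            · rw [Function.update_of_ne hli] at hl; exact Or.inr ⟨l, hl⟩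
          · rintro (h | ⟨l, hl⟩)
            · exact ⟨i, by rw [Function.update_self, h]⟩
            · by_cases hli : l = i
              · subst hli
                refine ⟨j, ?_⟩
                rw [Function.update_of_ne (Ne.symm hij), ← hψij, hl]
              · exact ⟨l, by rw [Function.update_of_ne hli]; exact hl⟩
        have hsub : (Finset.univ : Finset (Fin m)) \ insert a₀ (Finset.univ.image ψ)
            ⊂ (Finset.univ : Finset (Fin m)) \ Finset.univ.image ψ := by
          apply Finset.ssubset_iff_of_subset ?_ |>.mpr
          · exact ⟨a₀, ha₀, by simp⟩
          · apply Finset.sdiff_subset_sdiff le_rfl (Finset.subset_insert _ _)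
        rw [himg]
        have := Finset.card_lt_card hsub
        omega
      obtain ⟨ψ', hsurj, hle'⟩ := ih (Function.update ψ i a₀) hmeasure
      exact ⟨ψ', hsurj, le_trans hle hle'⟩

end surj

lemma sum_union_le {β : Type*} [DecidableEq β] (U V : Finset β) (f : β → ℕ) :
    ∑ p ∈ U ∪ V, f p ≤ ∑ p ∈ U, f p + ∑ p ∈ V, f p := by
  rw [← Finset.sum_union_inter]
  exact Nat.le_add_right _ _

lemma sum_sum_range_succ (f : ℕ → ℕ → ℕ) (t : ℕ) :
    (∑ a ∈ Finset.range (t+1), ∑ b ∈ Finset.range (t+1), f a b)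
      = (∑ a ∈ Finset.range t, ∑ b ∈ Finset.range t, f a b)
        + ((∑ a ∈ Finset.range t, f a t) + ((∑ b ∈ Finset.range t, f t b) + f t t)) := by
  rw [Finset.sum_range_succ (fun a => ∑ b ∈ Finset.range (t+1), f a b) t,
    Finset.sum_range_succ (f t), Finset.sum_congr rfl (fun a _ => Finset.sum_range_succ (f a) t),
    Finset.sum_add_distrib]
  ring

section stepB
variable {r : ℕ}

lemma stepB (n : Fin r → ℕ) :
    ∀ (t : ℕ) (H : SimpleGraph (Fin r)) [DecidableRel H.Adj] (s : Finset (Fin r)),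
    (∀ c : Finset (Fin r), c ⊆ s → ¬ H.IsNClique (t+1) c) →
    ∃ φ : Fin r → ℕ, (∀ i ∈ s, φ i < t) ∧
      (∑ p ∈ (s ×ˢ s).filter (fun p => H.Adj p.1 p.2), n p.1 * n p.2)
        ≤ ∑ a ∈ Finset.range t, ∑ b ∈ Finset.range t,
            (if a ≠ b then (∑ i ∈ s.filter (fun i => φ i = a), n i) *
              (∑ i ∈ s.filter (fun i => φ i = b), n i) else 0) := by
  intro t
  induction t with
  | zero =>
    intro H _ s hcf
    refine ⟨fun _ => 0, ?_, ?_⟩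
    · intro i hi
      exfalso
      exact hcf {i} (Finset.singleton_subset_iff.mpr hi)
        ⟨by simp [SimpleGraph.isClique_iff, Set.pairwise_singleton], by simp⟩
    · have : s = ∅ := by
        by_contra hs
        obtain ⟨i, hi⟩ := Finset.nonempty_iff_ne_empty.mpr hs
        exact hcf {i} (Finset.singleton_subset_iff.mpr hi)
          ⟨by simp [SimpleGraph.isClique_iff, Set.pairwise_singleton], by simp⟩
      subst this
      simp
  | succ t ih =>
    intro H _ s hcf
    rcases Finset.eq_empty_or_nonempty s with hs | hs
    · subst hs
      exact ⟨fun _ => 0, by simp, by simp⟩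
    obtain ⟨x, hx, hmax⟩ := Finset.exists_max_image s
      (fun i => ∑ j ∈ s.filter (fun j => H.Adj i j), n j) hs
    set A : Finset (Fin r) := s.filter (fun j => H.Adj x j) with hA
    set B : Finset (Fin r) := s \ A with hB
    have hAs : A ⊆ s := Finset.filter_subset _ _
    have hcfA : ∀ c : Finset (Fin r), c ⊆ A → ¬ H.IsNClique (t+1) c := by
      intro c hc hclique
      have hadj : ∀ b ∈ c, H.Adj x b := fun b hb => (Finset.mem_filter.mp (hc hb)).2
      have hxnc : x ∉ c := fun hxc => H.loopless.irrefl x (hadj x hxc)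
      refine hcf (insert x c) ?_ ?_
      · exact Finset.insert_subset hx (hc.trans hAs)
      · exact hclique.insert hadj
    obtain ⟨φ, hφ, hle⟩ := ih H A hcfA
    refine ⟨fun i => if i ∈ A then φ i else t, ?_, ?_⟩
    · intro i hi
      by_cases h : i ∈ A <;> simp [h]
      exact Nat.le_of_lt (hφ i h)
    -- main inequality
    set φ' : Fin r → ℕ := fun i => if i ∈ A then φ i else t with hφ'
    set nA := ∑ j ∈ A, n j with hnA
    set nB := ∑ i ∈ B, n i with hnB
    have hBs : B ⊆ s := Finset.sdiff_subset
    -- (K1) edge splitting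
    have hsub : (s ×ˢ s).filter (fun p => H.Adj p.1 p.2) ⊆
        ((A ×ˢ A).filter (fun p => H.Adj p.1 p.2)) ∪
          (((B ×ˢ s).filter (fun p => H.Adj p.1 p.2)) ∪
            ((s ×ˢ B).filter (fun p => H.Adj p.1 p.2))) := by
      intro p hp
      simp only [Finset.mem_filter, Finset.mem_product, Finset.mem_union, Finset.mem_sdiff,
        hB] at hp ⊢
      obtain ⟨⟨h1, h2⟩, hadj⟩ := hp
      by_cases hp1 : p.1 ∈ A
      · by_cases hp2 : p.2 ∈ A
        · exact Or.inl ⟨⟨hp1, hp2⟩, hadj⟩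
        · exact Or.inr (Or.inr ⟨⟨h1, h2, hp2⟩, hadj⟩)
      · exact Or.inr (Or.inl ⟨⟨⟨h1, hp1⟩, h2⟩, hadj⟩)
    have hT2 : ∑ p ∈ (B ×ˢ s).filter (fun p => H.Adj p.1 p.2), n p.1 * n p.2 ≤ nB * nA := by
      rw [Finset.sum_filter, Finset.sum_product]
      have hbd : ∀ i ∈ B, (∑ j ∈ s, if H.Adj i j then n i * n j else 0) ≤ n i * nA := by
        intro i hi
        have heq : (∑ j ∈ s, if H.Adj i j then n i * n j else 0)
            = n i * ∑ j ∈ s.filter (fun j => H.Adj i j), n j := by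
          rw [Finset.mul_sum, Finset.sum_filter]
        rw [heq]
        exact Nat.mul_le_mul_left _ (hmax i (hBs hi))
      calc ∑ i ∈ B, ∑ j ∈ s, (if H.Adj i j then n i * n j else 0)
          ≤ ∑ i ∈ B, n i * nA := Finset.sum_le_sum hbd
        _ = nB * nA := by rw [hnB, Finset.sum_mul]
    have hT3 : ∑ p ∈ (s ×ˢ B).filter (fun p => H.Adj p.1 p.2), n p.1 * n p.2 ≤ nB * nA := by
      rw [Finset.sum_filter, Finset.sum_product_right]
      have hbd : ∀ j ∈ B, (∑ i ∈ s, if H.Adj i j then n i * n j else 0) ≤ n j * nA := by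
        intro j hj
        have heq : (∑ i ∈ s, if H.Adj i j then n i * n j else 0)
            = n j * ∑ i ∈ s.filter (fun i => H.Adj j i), n i := by
          rw [Finset.mul_sum, Finset.sum_filter]
          exact Finset.sum_congr rfl
            (fun i _ => if_congr (H.adj_comm _ _) (Nat.mul_comm _ _) rfl)
        rw [heq]
        exact Nat.mul_le_mul_left _ (hmax j (hBs hj))
      calc ∑ j ∈ B, ∑ i ∈ s, (if H.Adj i j then n i * n j else 0)
          ≤ ∑ j ∈ B, n j * nA := Finset.sum_le_sum hbd
        _ = nB * nA := by rw [hnB, Finset.sum_mul]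
    have hK1 : (∑ p ∈ (s ×ˢ s).filter (fun p => H.Adj p.1 p.2), n p.1 * n p.2)
        ≤ (∑ p ∈ (A ×ˢ A).filter (fun p => H.Adj p.1 p.2), n p.1 * n p.2) + (nB * nA + nB * nA) :=
      calc (∑ p ∈ (s ×ˢ s).filter (fun p => H.Adj p.1 p.2), n p.1 * n p.2)
          ≤ ∑ p ∈ ((A ×ˢ A).filter (fun p => H.Adj p.1 p.2)) ∪
              (((B ×ˢ s).filter (fun p => H.Adj p.1 p.2)) ∪
                ((s ×ˢ B).filter (fun p => H.Adj p.1 p.2))), n p.1 * n p.2 :=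
            Finset.sum_le_sum_of_subset hsub
        _ ≤ (∑ p ∈ (A ×ˢ A).filter (fun p => H.Adj p.1 p.2), n p.1 * n p.2)
              + ∑ p ∈ ((B ×ˢ s).filter (fun p => H.Adj p.1 p.2)) ∪
                  ((s ×ˢ B).filter (fun p => H.Adj p.1 p.2)), n p.1 * n p.2 :=
            sum_union_le _ _ _
        _ ≤ (∑ p ∈ (A ×ˢ A).filter (fun p => H.Adj p.1 p.2), n p.1 * n p.2)
              + ((∑ p ∈ (B ×ˢ s).filter (fun p => H.Adj p.1 p.2), n p.1 * n p.2)
                + ∑ p ∈ (s ×ˢ B).filter (fun p => H.Adj p.1 p.2), n p.1 * n p.2) :=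
            Nat.add_le_add_left (sum_union_le _ _ _) _
        _ ≤ _ := Nat.add_le_add_left (Nat.add_le_add hT2 hT3) _
    -- (K2) value of the new partition
    have hf1 : ∀ a, a < t → s.filter (fun i => φ' i = a) = A.filter (fun i => φ i = a) := by
      intro a ha
      ext i
      simp only [Finset.mem_filter, hφ']
      constructor
      · rintro ⟨his, hi⟩
        by_cases hiA : i ∈ A
        · rw [if_pos hiA] at hi; exact ⟨hiA, hi⟩
        · rw [if_neg hiA] at hi; omega
      · rintro ⟨hiA, hi⟩
        exact ⟨hAs hiA, by rw [if_pos hiA]; exact hi⟩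
    have hf2 : s.filter (fun i => φ' i = t) = B := by
      ext i
      simp only [Finset.mem_filter, hφ', hB, Finset.mem_sdiff]
      constructor
      · rintro ⟨his, hi⟩
        refine ⟨his, fun hiA => ?_⟩
        rw [if_pos hiA] at hi
        exact absurd hi (Nat.ne_of_lt (hφ i hiA))
      · rintro ⟨his, hiA⟩
        exact ⟨his, by rw [if_neg hiA]⟩
    have hf3 : ∑ a ∈ Finset.range t, ∑ i ∈ A.filter (fun i => φ i = a), n i = nA :=
      Finset.sum_fiberwise_of_maps_to (fun i hi => Finset.mem_range.mpr (hφ i hi)) n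
    have hK2 : (∑ a ∈ Finset.range (t+1), ∑ b ∈ Finset.range (t+1),
          (if a ≠ b then (∑ i ∈ s.filter (fun i => φ' i = a), n i) *
            (∑ i ∈ s.filter (fun i => φ' i = b), n i) else 0))
        = (∑ a ∈ Finset.range t, ∑ b ∈ Finset.range t,
            (if a ≠ b then (∑ i ∈ A.filter (fun i => φ i = a), n i) *
              (∑ i ∈ A.filter (fun i => φ i = b), n i) else 0)) + (nA * nB + (nB * nA + 0)) := by
      rw [sum_sum_range_succ]
      congr 1
      · apply Finset.sum_congr rfl
        intro a ha
        apply Finset.sum_congr rfl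
        intro b hb
        rw [hf1 a (Finset.mem_range.mp ha), hf1 b (Finset.mem_range.mp hb)]
      · congr 1
        · have hterm : ∀ a ∈ Finset.range t,
              (if a ≠ t then (∑ i ∈ s.filter (fun i => φ' i = a), n i) *
                (∑ i ∈ s.filter (fun i => φ' i = t), n i) else 0)
              = (∑ i ∈ A.filter (fun i => φ i = a), n i) * nB := by
            intro a ha
            rw [if_pos (Nat.ne_of_lt (Finset.mem_range.mp ha)),
              hf1 a (Finset.mem_range.mp ha), hf2, ← hnB]
          rw [Finset.sum_congr rfl hterm, ← Finset.sum_mul, hf3]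
        · congr 1
          · have hterm : ∀ b ∈ Finset.range t,
                (if t ≠ b then (∑ i ∈ s.filter (fun i => φ' i = t), n i) *
                  (∑ i ∈ s.filter (fun i => φ' i = b), n i) else 0)
                = nB * (∑ i ∈ A.filter (fun i => φ i = b), n i) := by
              intro b hb
              rw [if_pos (Nat.ne_of_lt (Finset.mem_range.mp hb)).symm,
                hf1 b (Finset.mem_range.mp hb), hf2, ← hnB]
            rw [Finset.sum_congr rfl hterm, ← Finset.mul_sum, hf3]
          · simp
    rw [hK2]
    have hfin := Nat.add_le_add hle (le_refl (nB * nA + nB * nA))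
    calc (∑ p ∈ (s ×ˢ s).filter (fun p => H.Adj p.1 p.2), n p.1 * n p.2)
        ≤ (∑ p ∈ (A ×ˢ A).filter (fun p => H.Adj p.1 p.2), n p.1 * n p.2)
            + (nB * nA + nB * nA) := hK1
      _ ≤ (∑ a ∈ Finset.range t, ∑ b ∈ Finset.range t,
            (if a ≠ b then (∑ i ∈ A.filter (fun i => φ i = a), n i) *
              (∑ i ∈ A.filter (fun i => φ i = b), n i) else 0)) + (nB * nA + nB * nA) := hfin
      _ = _ := by ring
end stepB

section stepA
variable {r : ℕ} {n : Fin r → ℕ}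

/-- The graph on `Fin r` induced by a choice of one vertex in each class. -/
def pullback (G : SimpleGraph ((i : Fin r) × Fin (n i))) (x : ∀ k, Fin (n k)) :
    SimpleGraph (Fin r) where
  Adj i j := G.Adj ⟨i, x i⟩ ⟨j, x j⟩
  symm := ⟨fun _ _ h => G.adj_symm h⟩
  loopless := ⟨fun _ h => G.loopless.irrefl _ h⟩

lemma pullback_cliqueFree {t : ℕ} (G : SimpleGraph ((i : Fin r) × Fin (n i)))
    (x : ∀ k, Fin (n k)) (hcf : G.CliqueFree t) : (pullback G x).CliqueFree t := by
  intro c hc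
  have hinj : Function.Injective (fun i : Fin r => (⟨i, x i⟩ : (i : Fin r) × Fin (n i))) :=
    fun i j h => congrArg Sigma.fst h
  apply hcf (c.image (fun i => (⟨i, x i⟩ : (i : Fin r) × Fin (n i))))
  constructor
  · intro u hu v hv huv
    simp only [Finset.coe_image, Set.mem_image, Finset.mem_coe] at hu hv
    obtain ⟨i, hi, rfl⟩ := hu
    obtain ⟨j, hj, rfl⟩ := hv
    have hij : i ≠ j := fun h => huv (by rw [h])
    exact hc.1 hi hj hij
  · rw [Finset.card_image_of_injective _ hinj, hc.2]

lemma sum_sigma_univ (f : ((i : Fin r) × Fin (n i)) → ℕ) :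
    ∑ u : (i : Fin r) × Fin (n i), f u = ∑ i : Fin r, ∑ a : Fin (n i), f ⟨i, a⟩ := by
  rw [← Finset.univ_sigma_univ, Finset.sum_sigma]

lemma hand (G : SimpleGraph ((i : Fin r) × Fin (n i))) [DecidableRel G.Adj] :
    2 * G.edgeFinset.card
      = ∑ i : Fin r, ∑ a : Fin (n i), ∑ j : Fin r, ∑ b : Fin (n j),
          (if G.Adj ⟨i, a⟩ ⟨j, b⟩ then 1 else 0) := by
  rw [← SimpleGraph.sum_degrees_eq_twice_card_edges]
  have hdeg : ∀ u, G.degree u = ∑ v : (i : Fin r) × Fin (n i), (if G.Adj u v then 1 else 0) := by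
    intro u
    rw [← SimpleGraph.card_neighborFinset_eq_degree, SimpleGraph.neighborFinset_eq_filter,
      Finset.card_filter]
  rw [Finset.sum_congr rfl (fun u _ => hdeg u),
    sum_sigma_univ (fun u => ∑ v : (i : Fin r) × Fin (n i), (if G.Adj u v then 1 else 0))]
  exact Finset.sum_congr rfl (fun i _ => Finset.sum_congr rfl (fun a _ =>
    sum_sigma_univ (fun v => if G.Adj ⟨i, a⟩ v then 1 else 0)))

lemma pi_fiber_card_eq {i j : Fin r} (hij : i ≠ j) (q q' : Fin (n i) × Fin (n j)) :
    (Finset.univ.filter (fun x : ∀ k, Fin (n k) => (x i, x j) = q)).card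
      = (Finset.univ.filter (fun x : ∀ k, Fin (n k) => (x i, x j) = q')).card := by
  apply Finset.card_bij'
    (i := fun x _ => Function.update (Function.update x i q'.1) j q'.2)
    (j := fun x _ => Function.update (Function.update x i q.1) j q.2)
  · intro x hx
    simp only [Finset.mem_filter, Finset.mem_univ, true_and, Prod.mk.injEq] at hx
    funext k
    by_cases hkj : k = j
    · subst hkj
      rw [Function.update_self]
      exact (congrArg Prod.snd hx).symm
    · by_cases hki : k = i
      · subst hki
        rw [Function.update_of_ne hkj, Function.update_self]
        exact (congrArg Prod.fst hx).symm
      · rw [Function.update_of_ne hkj, Function.update_of_ne hki,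
          Function.update_of_ne hkj, Function.update_of_ne hki]
  · intro x hx
    simp only [Finset.mem_filter, Finset.mem_univ, true_and, Prod.mk.injEq] at hx
    funext k
    by_cases hkj : k = j
    · subst hkj
      rw [Function.update_self]
      exact (congrArg Prod.snd hx).symm
    · by_cases hki : k = i
      · subst hki
        rw [Function.update_of_ne hkj, Function.update_self]
        exact (congrArg Prod.fst hx).symm
      · rw [Function.update_of_ne hkj, Function.update_of_ne hki,
          Function.update_of_ne hkj, Function.update_of_ne hki]


  · intro x hx
    simp only [Finset.mem_filter, Finset.mem_univ, true_and]
    rw [Prod.ext_iff]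
    exact ⟨by rw [Function.update_of_ne hij, Function.update_self],
      by rw [Function.update_self]⟩
  · intro x hx
    simp only [Finset.mem_filter, Finset.mem_univ, true_and]
    rw [Prod.ext_iff]
    exact ⟨by rw [Function.update_of_ne hij, Function.update_self],
      by rw [Function.update_self]⟩
lemma pi_fiber_mul {i j : Fin r} (hij : i ≠ j) (q : Fin (n i) × Fin (n j)) :
    (n i * n j) * (Finset.univ.filter (fun x : ∀ k, Fin (n k) => (x i, x j) = q)).card
      = ∏ k, n k := by
  have hcard : (Finset.univ : Finset (∀ k, Fin (n k))).card = ∏ k, n k := by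
    simp [Finset.card_univ]
  have hfib := Finset.card_eq_sum_card_fiberwise
    (s := (Finset.univ : Finset (∀ k, Fin (n k))))
    (f := fun x : ∀ k, Fin (n k) => (x i, x j)) (t := Finset.univ)
    (fun x _ => Finset.mem_univ _)
  rw [hcard] at hfib
  rw [hfib, Finset.sum_congr rfl (fun q' _ => pi_fiber_card_eq hij q' q), Finset.sum_const,
    smul_eq_mul]
  congr 1
  simp [Finset.card_univ]

lemma pi_exchange {i j : Fin r} (hij : i ≠ j) (F : Fin (n i) → Fin (n j) → ℕ) :
    (n i * n j) * ∑ x : ∀ k, Fin (n k), F (x i) (x j)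
      = (∏ k, n k) * (∑ a, ∑ b, F a b) := by
  have hgroup : ∑ x : ∀ k, Fin (n k), F (x i) (x j)
      = ∑ q : Fin (n i) × Fin (n j),
          F q.1 q.2 * (Finset.univ.filter (fun x : ∀ k, Fin (n k) => (x i, x j) = q)).card := by
    rw [← Finset.sum_fiberwise Finset.univ (fun x : ∀ k, Fin (n k) => (x i, x j))
      (fun x => F (x i) (x j))]
    refine Finset.sum_congr rfl (fun q _ => ?_)
    rw [Finset.sum_congr rfl (fun x hx => ?_), Finset.sum_const, smul_eq_mul, Nat.mul_comm]
    have hx' := (Finset.mem_filter.mp hx).2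
    rw [show x i = q.1 from congrArg Prod.fst hx', show x j = q.2 from congrArg Prod.snd hx']
  rw [hgroup, Finset.mul_sum]
  rw [Finset.sum_congr rfl (fun q _ => by
    rw [← Nat.mul_assoc, Nat.mul_comm (n i * n j) (F q.1 q.2), Nat.mul_assoc,
      pi_fiber_mul hij q])]
  rw [← Finset.sum_mul, Nat.mul_comm]
  congr 1
  rw [← Finset.univ_product_univ, Finset.sum_product]

lemma stepA (G : SimpleGraph ((i : Fin r) × Fin (n i))) [DecidableRel G.Adj]
    (hGK : ∀ u v, G.Adj u v → u.1 ≠ v.1) :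
    (∏ k, n k) * (∑ i : Fin r, ∑ a : Fin (n i), ∑ j : Fin r, ∑ b : Fin (n j),
        (if G.Adj ⟨i, a⟩ ⟨j, b⟩ then 1 else 0))
      = ∑ x : ∀ k, Fin (n k), ∑ i : Fin r, ∑ j : Fin r,
          (if G.Adj ⟨i, x i⟩ ⟨j, x j⟩ then n i * n j else 0) := by
  have hswap : ∀ (f : (∀ k, Fin (n k)) → Fin r → Fin r → ℕ),
      (∑ x : ∀ k, Fin (n k), ∑ i : Fin r, ∑ j : Fin r, f x i j)
        = ∑ i : Fin r, ∑ j : Fin r, ∑ x : ∀ k, Fin (n k), f x i j := by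
    intro f
    rw [Finset.sum_comm]
    exact Finset.sum_congr rfl (fun i _ => Finset.sum_comm)
  rw [hswap (fun x i j => if G.Adj ⟨i, x i⟩ ⟨j, x j⟩ then n i * n j else 0)]
  rw [Finset.mul_sum]
  refine Finset.sum_congr rfl (fun i _ => ?_)
  rw [Finset.sum_comm (f := fun a j => ∑ b : Fin (n j), if G.Adj ⟨i, a⟩ ⟨j, b⟩ then 1 else 0)]
  rw [Finset.mul_sum]
  refine Finset.sum_congr rfl (fun j _ => ?_)
  by_cases hij : i = j
  · subst hij
    have h2 : ∀ a b : Fin (n i), (if G.Adj ⟨i, a⟩ ⟨i, b⟩ then 1 else 0) = 0 :=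
      fun a b => if_neg (fun h => hGK ⟨i, a⟩ ⟨i, b⟩ h rfl)
    rw [Finset.sum_congr rfl (fun x _ => if_neg (G.loopless.irrefl _)),
      Finset.sum_congr rfl (fun a _ => Finset.sum_congr rfl
        (fun b _ => h2 a b))]
    simp
  · have hmul : ∑ x : ∀ k, Fin (n k), (if G.Adj ⟨i, x i⟩ ⟨j, x j⟩ then n i * n j else 0)
        = (n i * n j) * ∑ x : ∀ k, Fin (n k), (if G.Adj ⟨i, x i⟩ ⟨j, x j⟩ then 1 else 0) := by
      rw [Finset.mul_sum]
      exact Finset.sum_congr rfl (fun x _ => by split <;> simp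
)
    rw [hmul, pi_exchange hij (fun a b => if G.Adj ⟨i, a⟩ ⟨j, b⟩ then 1 else 0)]

end stepA

section bridge
variable {r m : ℕ}

lemma range_to_fin (n : Fin r → ℕ) (φ : Fin r → ℕ) (hφ : ∀ i, φ i < m) :
    (∑ a ∈ Finset.range m, ∑ b ∈ Finset.range m,
      (if a ≠ b then (∑ i ∈ Finset.univ.filter (fun i => φ i = a), n i) *
        (∑ i ∈ Finset.univ.filter (fun i => φ i = b), n i) else 0))
    = ∑ a : Fin m, ∑ b : Fin m,
        (if a ≠ b then clS n (fun i => ⟨φ i, hφ i⟩) a * clS n (fun i => ⟨φ i, hφ i⟩) b else 0) := by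
  have hfil : ∀ a : Fin m, Finset.univ.filter (fun i => φ i = (a : ℕ))
      = Finset.univ.filter (fun i => (⟨φ i, hφ i⟩ : Fin m) = a) := by
    intro a
    ext i
    simp [Fin.ext_iff]
  rw [← Fin.sum_univ_eq_sum_range]
  refine Finset.sum_congr rfl (fun a _ => ?_)
  rw [← Fin.sum_univ_eq_sum_range]
  refine Finset.sum_congr rfl (fun b _ => ?_)
  rw [clS, clS, ← hfil a, ← hfil b]
  exact if_congr (by simp [Fin.ext_iff]) rfl rfl

lemma collapse_const (n : Fin r → ℕ) (c : Prop) [Decidable c] (i j : Fin r) :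
    (∑ _a : Fin (n i), ∑ _b : Fin (n j), if c then 1 else 0) = if c then n i * n j else 0 := by
  split <;> simp [Finset.sum_const, Finset.card_univ, Nat.mul_comm]

lemma group_classes (n : Fin r → ℕ) (P : Fin r → Fin m) :
    (∑ i : Fin r, ∑ j : Fin r, if P i ≠ P j then n i * n j else 0)
      = ∑ a : Fin m, ∑ b : Fin m, (if a ≠ b then clS n P a * clS n P b else 0) := by
  have step1 : ∀ i : Fin r, (∑ j : Fin r, if P i ≠ P j then n i * n j else 0)
      = ∑ b : Fin m, (if P i ≠ b then n i * clS n P b else 0) := by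
    intro i
    rw [← Finset.sum_fiberwise Finset.univ P (fun j => if P i ≠ P j then n i * n j else 0)]
    refine Finset.sum_congr rfl (fun b _ => ?_)
    have h1 : ∑ j ∈ Finset.univ.filter (fun j => P j = b), (if P i ≠ P j then n i * n j else 0)
        = ∑ j ∈ Finset.univ.filter (fun j => P j = b), (if P i ≠ b then n i * n j else 0) :=
      Finset.sum_congr rfl (fun j hj => by rw [(Finset.mem_filter.mp hj).2])
    rw [h1]
    by_cases h : P i ≠ b
    · simp only [if_pos h]
      rw [clS, Finset.mul_sum]
    · simp only [if_neg h, Finset.sum_const_zero]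
  rw [Finset.sum_congr rfl (fun i _ => step1 i), Finset.sum_comm]
  have step2 : ∀ b : Fin m, (∑ i : Fin r, if P i ≠ b then n i * clS n P b else 0)
      = ∑ a : Fin m, (if a ≠ b then clS n P a * clS n P b else 0) := by
    intro b
    rw [← Finset.sum_fiberwise Finset.univ P (fun i => if P i ≠ b then n i * clS n P b else 0)]
    refine Finset.sum_congr rfl (fun a _ => ?_)
    have h1 : ∑ i ∈ Finset.univ.filter (fun i => P i = a), (if P i ≠ b then n i * clS n P b else 0)
        = ∑ i ∈ Finset.univ.filter (fun i => P i = a), (if a ≠ b then n i * clS n P b else 0) :=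
      Finset.sum_congr rfl (fun i hi => by rw [(Finset.mem_filter.mp hi).2])
    rw [h1]
    by_cases h : a ≠ b
    · simp only [if_pos h]
      rw [show clS n P a = ∑ i ∈ Finset.univ.filter (fun i => P i = a), n i from rfl,
        Finset.sum_mul]
    · simp only [if_neg h, Finset.sum_const_zero]
  rw [Finset.sum_congr rfl (fun b _ => step2 b), Finset.sum_comm]

end bridge

/-- The complete multipartite graph obtained by merging classes according to `P`. -/
def mergedGraph {r m : ℕ} (n : Fin r → ℕ) (P : Fin r → Fin m) :
    SimpleGraph (Σ i : Fin r, Fin (n i)) where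
  Adj u v := P u.1 ≠ P v.1
  symm := ⟨fun _ _ h => h.symm⟩
  loopless := ⟨fun _ h => h rfl⟩

instance {r m : ℕ} (n : Fin r → ℕ) (P : Fin r → Fin m) :
    DecidableRel (mergedGraph n P).Adj :=
  fun _ _ => inferInstanceAs (Decidable ¬ _)

lemma merged_count {r m : ℕ} (n : Fin r → ℕ) (P : Fin r → Fin m) :
    2 * (mergedGraph n P).edgeFinset.card = 2 * partitionValue n P := by
  rw [hand (mergedGraph n P)]
  have hcoll : ∀ i : Fin r,
      (∑ a : Fin (n i), ∑ j : Fin r, ∑ b : Fin (n j),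
        if (mergedGraph n P).Adj ⟨i, a⟩ ⟨j, b⟩ then 1 else 0)
      = ∑ j : Fin r, (if P i ≠ P j then n i * n j else 0) := by
    intro i
    rw [Finset.sum_comm]
    exact Finset.sum_congr rfl (fun j _ => collapse_const n (P i ≠ P j) i j)
  rw [Finset.sum_congr rfl (fun i _ => hcoll i), group_classes n P, pv_double n P]

theorem stmt4 (r t : ℕ) (ht : 3 ≤ t) (hr : t ≤ r) (n : Fin r → ℕ)
    (hpos : ∀ i, 0 < n i) (hmono : Antitone n) :
    IsGreatest {m : ℕ | ∃ G ≤ completeMultipartite n, G.CliqueFree t ∧ G.edgeSet.ncard = m}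
      (fval r t n) := by
  have hm1 : t - 1 + 1 = t := by omega
  constructor
  · -- membership: the optimal complete multipartite graph
    have hsurj_ex : ∃ P : Fin r → Fin (t - 1), Function.Surjective P := by
      refine ⟨fun i => ⟨min i.val (t - 2), by omega⟩, fun a => ?_⟩
      have ha : a.val ≤ t - 2 := by omega
      refine ⟨⟨a.val, by omega⟩, ?_⟩
      ext
      simp [Nat.min_eq_left ha]
    obtain ⟨Pe, hPe⟩ := hsurj_ex
    have hne : (Finset.univ.filter
        (fun P : Fin r → Fin (t - 1) => Function.Surjective P)).Nonempty :=
      ⟨Pe, Finset.mem_filter.mpr ⟨Finset.mem_univ _, hPe⟩⟩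
    obtain ⟨P₀, hP₀mem, hP₀⟩ := Finset.exists_mem_eq_sup _ hne (partitionValue n)
    refine ⟨mergedGraph n P₀, fun u v h => (fun he => h (by rw [he])), ?_, ?_⟩
    · -- clique-free
      have hcol : (mergedGraph n P₀).Colorable (t - 1) :=
        ⟨SimpleGraph.Coloring.mk (fun v => P₀ v.1) (fun {u v} h => h)⟩
      exact hcol.cliqueFree (by omega)
    · -- edge count
      have h2e := merged_count n P₀
      have hcount : (mergedGraph n P₀).edgeFinset.card = partitionValue n P₀ := by omega
      have hnc : (mergedGraph n P₀).edgeSet.ncard = (mergedGraph n P₀).edgeFinset.card := by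
        rw [← SimpleGraph.coe_edgeFinset, Set.ncard_coe_finset]
      rw [hnc, hcount]
      exact hP₀.symm
  · -- upper bound
    rintro M ⟨G, hGle, hcf, rfl⟩
    haveI hdec : DecidableRel G.Adj := Classical.decRel _
    have hGK : ∀ u v : (Σ i : Fin r, Fin (n i)), G.Adj u v → u.1 ≠ v.1 :=
      fun u v h => hGle h
    have hncard : G.edgeSet.ncard = G.edgeFinset.card := by
      rw [← SimpleGraph.coe_edgeFinset, Set.ncard_coe_finset]
    rw [hncard]
    have h2e := hand G
    have hA := stepA G hGK
    have hprodpos : 0 < ∏ k, n k := Finset.prod_pos (fun k _ => hpos k)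
    have perx : ∀ x : ∀ k, Fin (n k),
        (∑ i : Fin r, ∑ j : Fin r, if G.Adj ⟨i, x i⟩ ⟨j, x j⟩ then n i * n j else 0)
          ≤ 2 * fval r t n := by
      intro x
      haveI : DecidableRel (pullback G x).Adj := fun i j => hdec _ _
      have hcfx : ∀ c : Finset (Fin r), c ⊆ Finset.univ →
          ¬ (pullback G x).IsNClique (t - 1 + 1) c := by
        intro c _ hcl
        rw [hm1] at hcl
        exact pullback_cliqueFree G x hcf c hcl
      obtain ⟨φ, hφ, hle⟩ := stepB n (t - 1) (pullback G x) Finset.univ hcfx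
      rw [Finset.sum_filter, Finset.sum_product] at hle
      have hφ' : ∀ i, φ i < t - 1 := fun i => hφ i (Finset.mem_univ i)
      have hgoal : (∑ i : Fin r, ∑ j : Fin r,
            if G.Adj ⟨i, x i⟩ ⟨j, x j⟩ then n i * n j else 0)
          = ∑ i ∈ Finset.univ, ∑ j ∈ Finset.univ,
              if (pullback G x).Adj i j then n i * n j else 0 :=
        Finset.sum_congr rfl (fun i _ => Finset.sum_congr rfl
          (fun j _ => if_congr Iff.rfl rfl rfl))
      rw [hgoal]
      refine le_trans hle ?_
      have hfil : ∀ a, Finset.univ.filter (fun i : Fin r => φ i = a)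
          = (Finset.univ : Finset (Fin r)).filter (fun i => φ i = a) := fun a => rfl
      rw [range_to_fin n φ hφ', pv_double]
      obtain ⟨ψ', hsurj, hlepv⟩ := exists_surj_ge (m := t - 1) n (Nat.le_trans (Nat.sub_le t 1) hr) (fun i => ⟨φ i, hφ' i⟩)
      have hfv : partitionValue n ψ' ≤ fval r t n :=
        Finset.le_sup (Finset.mem_filter.mpr ⟨Finset.mem_univ _, hsurj⟩)
      exact Nat.mul_le_mul_left 2 (le_trans hlepv hfv)
    have hsum : (∑ x : ∀ k, Fin (n k), ∑ i : Fin r, ∑ j : Fin r,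
          if G.Adj ⟨i, x i⟩ ⟨j, x j⟩ then n i * n j else 0)
        ≤ ∑ _x : ∀ k, Fin (n k), 2 * fval r t n :=
      Finset.sum_le_sum (fun x _ => perx x)
    rw [Finset.sum_const, smul_eq_mul, Finset.card_univ] at hsum
    have hcardpi : Fintype.card (∀ k, Fin (n k)) = ∏ k, n k := by simp
    rw [hcardpi] at hsum
    have hkey : (∏ k, n k) * (2 * G.edgeFinset.card) ≤ (∏ k, n k) * (2 * fval r t n) := by
      rw [h2e, hA]
      exact hsum
    have h2 := Nat.le_of_mul_le_mul_left hkey hprodpos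
    exact Nat.le_of_mul_le_mul_left h2 Nat.zero_lt_two
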